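/- arXiv:2305.12946 — 4 statements merged into one kernel-verified Lean document; each statement's English description precedes it below -/
import Mathlib

section
/- Let A be a real N×N Hurwitz matrix and B a real N×m matrix. Then the function t ↦ e^{tA} B Bᵀ e^{tAᵀ} is integrable on [0,∞), and the controllability Gramian P := ∫₀^∞ e^{tA} B Bᵀ e^{tAᵀ} dt is a symmetric positive semidefinite matrix satisfying the Lyapunov equation A P + P Aᵀ = −B Bᵀ. -/
open Matrix MeasureTheory

open NormedSpace Filter
open scoped ENNReal NNReal

section AuxiliaryLemmas

attribute [local instance] Matrix.linftyOpSemiNormedRing Matrix.linftyOpNormedRing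
  Matrix.linftyOpNormedAlgebra

/-- Spectral mapping (one inclusion) for the matrix exponential: every element of the
spectrum of `exp M` has the form `exp μ` for an eigenvalue `μ` of `M`. -/
lemma spec_exp_subset_aux {n : ℕ} (M : Matrix (Fin n) (Fin n) ℂ) {ν : ℂ}
    (hν : ν ∈ spectrum ℂ (exp M)) :
    ∃ μ ∈ spectrum ℂ M, Complex.exp μ = ν := by
  rw [spectrum.mem_iff, Algebra.algebraMap_eq_smul_one] at hν
  have hdet : (ν • (1 : Matrix (Fin n) (Fin n) ℂ) - exp M).det = 0 := by
    by_contra h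
    exact hν ((Matrix.isUnit_iff_isUnit_det _).2 (isUnit_iff_ne_zero.2 h))
  obtain ⟨v, hv0, hv⟩ := (Matrix.exists_mulVec_eq_zero_iff).2 hdet
  have hvE : exp M *ᵥ v = ν • v := by
    rw [Matrix.sub_mulVec, sub_eq_zero] at hv
    rw [← hv, Matrix.smul_mulVec, Matrix.one_mulVec]
  set S : Submodule ℂ (Fin n → ℂ) := Module.End.eigenspace (Matrix.mulVecLin (exp M)) ν
    with hS
  have hmemS : ∀ w, w ∈ S ↔ exp M *ᵥ w = ν • w := by
    intro w
    rw [hS, Module.End.mem_eigenspace_iff, Matrix.mulVecLin_apply]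
  have hvS : v ∈ S := (hmemS v).2 hvE
  have hMS : ∀ w ∈ S, Matrix.mulVecLin M w ∈ S := by
    intro w hw
    rw [hmemS] at hw ⊢
    have hcomm : exp M * M = M * exp M := ((Commute.refl M).exp_left).eq
    rw [Matrix.mulVecLin_apply, Matrix.mulVec_mulVec, hcomm, ← Matrix.mulVec_mulVec, hw,
      Matrix.mulVec_smul]
  let f : S →ₗ[ℂ] S := LinearMap.restrict (Matrix.mulVecLin M) hMS
  haveI : Nontrivial S := nontrivial_of_ne ⟨v, hvS⟩ 0 (by simpa using hv0)
  obtain ⟨μ, hμ⟩ := Module.End.exists_eigenvalue f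
  obtain ⟨w, hw⟩ := hμ.exists_hasEigenvector
  have hu0 : (w : Fin n → ℂ) ≠ 0 := by
    simpa [Submodule.coe_eq_zero] using hw.right
  have hMu : M *ᵥ (w : Fin n → ℂ) = μ • (w : Fin n → ℂ) := by
    have := congrArg Subtype.val hw.apply_eq_smul
    simpa [f, LinearMap.restrict_apply] using this
  refine ⟨μ, ?_, ?_⟩
  · rw [spectrum.mem_iff, Algebra.algebraMap_eq_smul_one]
    intro hU
    rw [Matrix.isUnit_iff_isUnit_det, isUnit_iff_ne_zero] at hU
    refine hU ((Matrix.exists_mulVec_eq_zero_iff).1 ⟨w, hu0, ?_⟩)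
    rw [Matrix.sub_mulVec, Matrix.smul_mulVec, Matrix.one_mulVec, hMu, sub_self]
  · have hpow : ∀ k : ℕ, (M ^ k) *ᵥ (w : Fin n → ℂ) = (μ ^ k) • (w : Fin n → ℂ) := by
      intro k
      induction k with
      | zero => simp [Matrix.one_mulVec]
      | succ k ih =>
        rw [pow_succ, ← Matrix.mulVec_mulVec, hMu, Matrix.mulVec_smul, ih, smul_smul, pow_succ]
        ring_nf
    let L0 : Matrix (Fin n) (Fin n) ℂ →ₗ[ℂ] (Fin n → ℂ) :=
      { toFun := fun P => P *ᵥ (w : Fin n → ℂ)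
        map_add' := fun P Q => Matrix.add_mulVec P Q _
        map_smul' := fun c P => Matrix.smul_mulVec c P _ }
    let L : Matrix (Fin n) (Fin n) ℂ →L[ℂ] (Fin n → ℂ) := L0.toContinuousLinearMap
    have hLexp : exp M *ᵥ (w : Fin n → ℂ) = Complex.exp μ • (w : Fin n → ℂ) := by
      have h1 : exp M *ᵥ (w : Fin n → ℂ) = L (exp M) := rfl
      rw [h1, exp_eq_tsum ℂ, ContinuousLinearMap.map_tsum L (expSeries_summable' (𝕂 := ℂ) M)]
      have h2 : ∀ k : ℕ, L (((k.factorial : ℂ))⁻¹ • M ^ k)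
          = (((k.factorial : ℂ))⁻¹ * μ ^ k) • (w : Fin n → ℂ) := by
        intro k
        rw [_root_.map_smul]
        show ((k.factorial : ℂ))⁻¹ • ((M ^ k) *ᵥ (w : Fin n → ℂ)) = _
        rw [hpow, smul_smul]
      simp_rw [h2]
      rw [Summable.tsum_smul_const]
      · congr 1
        rw [Complex.exp_eq_exp_ℂ, exp_eq_tsum ℂ]
        simp_rw [smul_eq_mul]
      · have := expSeries_summable' (𝕂 := ℂ) (μ : ℂ)
        simpa [smul_eq_mul] using this
    have hwS : exp M *ᵥ (w : Fin n → ℂ) = ν • (w : Fin n → ℂ) := (hmemS _).1 w.2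
    have : (Complex.exp μ - ν) • (w : Fin n → ℂ) = 0 := by
      rw [sub_smul, ← hLexp, hwS, sub_self]
    rcases smul_eq_zero.1 this with h | h
    · exact sub_eq_zero.1 h
    · exact absurd h hu0

/-- The entrywise real-to-complex map commutes with the matrix exponential. -/
lemma exp_map_ofReal_aux {n : ℕ} (A : Matrix (Fin n) (Fin n) ℝ) :
    (exp A).map Complex.ofReal = exp (A.map Complex.ofReal) := by
  let φ : Matrix (Fin n) (Fin n) ℝ →+* Matrix (Fin n) (Fin n) ℂ :=
    (Complex.ofRealHom).mapMatrix
  have hφ : Continuous φ := by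
    show Continuous fun M : Matrix (Fin n) (Fin n) ℝ => M.map Complex.ofReal
    exact continuous_id.matrix_map Complex.continuous_ofReal
  have h1 := map_exp φ hφ A
  have h2 : (exp : Matrix (Fin n) (Fin n) ℂ → _) = exp :=
    rfl
  show φ (exp A) = _
  exact h1

lemma entry_le_linfty_aux {n : ℕ} (P : Matrix (Fin n) (Fin n) ℂ) (i j : Fin n) :
    ‖P i j‖ ≤ ‖P‖ := by
  have h : ‖P i j‖₊ ≤ ‖P‖₊ := by
    rw [Matrix.linfty_opNNNorm_def]
    exact le_trans
      (Finset.single_le_sum (f := fun j' => ‖P i j'‖₊) (fun _ _ => zero_le) (Finset.mem_univ j))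
      (Finset.le_sup (f := fun i => ∑ j, ‖P i j‖₊) (Finset.mem_univ i))
  exact_mod_cast h

/-- Entrywise exponential decay of `exp (t • A)` for a Hurwitz matrix `A`. -/
lemma exp_entry_decay_aux {n : ℕ} (A : Matrix (Fin n) (Fin n) ℝ)
    (hA : ∀ μ ∈ spectrum ℂ (A.map Complex.ofReal), μ.re < 0) :
    ∃ c C : ℝ, 0 < c ∧ 0 ≤ C ∧ ∀ t : ℝ, 0 ≤ t → ∀ i j,
      |exp (t • A) i j| ≤ C * Real.exp (-(c * t)) := by
  rcases Nat.eq_zero_or_pos n with hn | hn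
  · exact ⟨1, 0, one_pos, le_refl 0, fun t ht i j => absurd i.isLt (by omega)⟩
  haveI : Nonempty (Fin n) := Fin.pos_iff_nonempty.1 hn
  set Ac := A.map Complex.ofReal with hAc
  have hne : (spectrum ℂ Ac).Nonempty := spectrum.nonempty Ac
  have hK : IsCompact (spectrum ℂ Ac) := spectrum.isCompact Ac
  obtain ⟨μ₀, hμ₀, hmax⟩ := hK.exists_isMaxOn hne (Complex.continuous_re.continuousOn)
  set δ := -μ₀.re with hδdef
  have hδ : 0 < δ := by have := hA μ₀ hμ₀; simp only [hδdef]; linarith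
  set ε := δ / 2 with hεdef
  have hε : 0 < ε := by positivity
  set E := exp Ac with hE
  have hsplt : ∀ ν ∈ spectrum ℂ E, ‖ν‖₊ < Real.toNNReal (Real.exp (-ε)) := by
    intro ν hν
    obtain ⟨μ, hμ, rfl⟩ := spec_exp_subset_aux Ac hν
    rw [← NNReal.coe_lt_coe]
    rw [coe_nnnorm, Real.coe_toNNReal _ (Real.exp_pos _).le, Complex.norm_exp]
    have h1 : μ.re ≤ μ₀.re := hmax hμ
    apply Real.exp_lt_exp.2
    have : -δ < -ε := by simp only [hεdef]; linarith
    have h2 : μ₀.re = -δ := by simp [hδdef]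
    linarith
  have hρ : spectralRadius ℂ E < (Real.toNNReal (Real.exp (-ε)) : ℝ≥0∞) :=
    spectrum.spectralRadius_lt_of_forall_lt (a := E) hsplt
  have htend := spectrum.pow_nnnorm_pow_one_div_tendsto_nhds_spectralRadius E
  obtain ⟨k, hEk, hk1⟩ := ((htend.eventually_lt_const hρ).and (eventually_ge_atTop 1)).exists
  have hkpos : (0:ℝ) < (k:ℝ) := by exact_mod_cast hk1
  have hEk' : ‖E ^ k‖ ≤ Real.exp (-(ε * k)) := by
    have h1 : (‖E ^ k‖₊ : ℝ≥0∞) < (Real.toNNReal (Real.exp (-ε)) : ℝ≥0∞) ^ (k:ℝ) := by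
      calc (‖E ^ k‖₊ : ℝ≥0∞) = ((‖E ^ k‖₊ : ℝ≥0∞) ^ (1/(k:ℝ))) ^ (k:ℝ) := by
            rw [← ENNReal.rpow_mul, one_div, inv_mul_cancel₀ (ne_of_gt hkpos),
              ENNReal.rpow_one]
        _ < _ := ENNReal.rpow_lt_rpow hEk hkpos
    rw [← ENNReal.coe_rpow_of_nonneg _ (le_of_lt hkpos), ENNReal.coe_lt_coe] at h1
    have h2 := NNReal.coe_lt_coe.2 h1
    rw [NNReal.coe_rpow, Real.coe_toNNReal _ (Real.exp_pos _).le, coe_nnnorm,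
      Real.rpow_def_of_pos (Real.exp_pos _), Real.log_exp] at h2
    have h3 : -ε * (k:ℝ) = -(ε * k) := by ring
    rw [h3] at h2
    exact h2.le
  have hgc : Continuous fun s : ℝ => exp (s • Ac) :=
    exp_continuous.comp (continuous_id.smul continuous_const)
  obtain ⟨M₀, hM₀⟩ :=
    (isCompact_Icc (a := (0:ℝ)) (b := (k:ℝ))).exists_bound_of_continuousOn hgc.continuousOn
  set M₁ := max M₀ 1 with hM₁def
  have hM₁pos : 0 < M₁ := lt_of_lt_of_le one_pos (le_max_right _ _)
  have hFE : exp ((k:ℝ) • Ac) = E ^ k := by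
    rw [Nat.cast_smul_eq_nsmul ℝ k Ac, Matrix.exp_nsmul]
  have claim : ∀ q : ℕ, ∀ s ∈ Set.Icc (0:ℝ) (k:ℝ),
      ‖exp (((q:ℝ) * (k:ℝ) + s) • Ac)‖ ≤ Real.exp (-(ε*k)) ^ q * M₁ := by
    intro q
    induction q with
    | zero =>
      intro s hs
      have h0 : ((0:ℕ):ℝ) * (k:ℝ) + s = s := by push_cast; ring
      rw [h0, pow_zero, one_mul]
      exact le_trans (hM₀ s hs) (le_max_left _ _)
    | succ q ih =>
      intro s hs
      have hsc : (((q+1:ℕ):ℝ) * (k:ℝ) + s) = (k:ℝ) + (((q:ℕ):ℝ) * (k:ℝ) + s) := by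
        push_cast; ring
      have hsplit : (((q+1:ℕ):ℝ) * (k:ℝ) + s) • Ac
          = (k:ℝ) • Ac + (((q:ℕ):ℝ) * (k:ℝ) + s) • Ac := by
        rw [← add_smul, hsc]
      rw [hsplit, Matrix.exp_add_of_commute _ _ (((Commute.refl Ac).smul_right _).smul_left _)]
      calc ‖exp ((k:ℝ) • Ac) * exp ((((q:ℕ):ℝ) * (k:ℝ) + s) • Ac)‖
          ≤ ‖exp ((k:ℝ) • Ac)‖ * ‖exp ((((q:ℕ):ℝ) * (k:ℝ) + s) • Ac)‖ := norm_mul_le _ _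
        _ ≤ Real.exp (-(ε*k)) * (Real.exp (-(ε*k)) ^ q * M₁) := by
            apply mul_le_mul (hFE ▸ hEk') (ih s hs) (norm_nonneg _) (Real.exp_pos _).le
        _ = Real.exp (-(ε*k)) ^ (q+1) * M₁ := by ring
  refine ⟨ε, M₁ * Real.exp (ε * k), hε, by positivity, ?_⟩
  intro t ht i j
  set q := ⌊t / (k:ℝ)⌋₊ with hq
  set s := t - (q:ℝ) * (k:ℝ) with hs
  have hqk : (q:ℝ) * (k:ℝ) ≤ t := by
    have h1 : (q:ℝ) ≤ t / (k:ℝ) := Nat.floor_le (div_nonneg ht hkpos.le)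
    calc (q:ℝ) * (k:ℝ) ≤ (t / (k:ℝ)) * (k:ℝ) := by nlinarith
      _ = t := by field_simp
  have hs0 : 0 ≤ s := by simp only [hs]; linarith
  have hsk : s ≤ (k:ℝ) := by
    have h1 : t / (k:ℝ) < (q:ℝ) + 1 := Nat.lt_floor_add_one _
    have h2 : t < ((q:ℝ) + 1) * (k:ℝ) := by
      calc t = (t / (k:ℝ)) * (k:ℝ) := by field_simp
        _ < ((q:ℝ) + 1) * (k:ℝ) := by nlinarith
    simp only [hs]; nlinarith
  have hts : t = (q:ℝ) * (k:ℝ) + s := by simp only [hs]; ring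
  have hnorm : ‖exp (t • Ac)‖ ≤ Real.exp (-(ε*k)) ^ q * M₁ := by
    rw [hts]; exact claim q s ⟨hs0, hsk⟩
  have hentry : |exp (t • A) i j| ≤ ‖exp (t • Ac)‖ := by
    have hmap := exp_map_ofReal_aux (t • A)
    have hsm : (t • A).map Complex.ofReal = t • Ac := by
      ext i' j'
      simp [Matrix.map_apply, hAc, Complex.real_smul, Complex.ofReal_mul]
    rw [hsm] at hmap
    calc |exp (t • A) i j| = ‖((exp (t • A)).map Complex.ofReal) i j‖ := by
          simp [Matrix.map_apply, Complex.norm_real]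
      _ = ‖(exp (t • Ac)) i j‖ := by rw [hmap]
      _ ≤ ‖exp (t • Ac)‖ := entry_le_linfty_aux _ i j
  have hbound : Real.exp (-(ε*k)) ^ q * M₁
      ≤ M₁ * Real.exp (ε * (k:ℝ)) * Real.exp (-(ε * t)) := by
    have h1 : Real.exp (-(ε*k)) ^ q = Real.exp ((q:ℝ) * (-(ε * (k:ℝ)))) := by
      rw [Real.exp_nat_mul]
    rw [h1]
    have h2 : (q:ℝ) * (-(ε * (k:ℝ))) = -(ε * t) + ε * s := by rw [hts]; ring
    rw [h2, Real.exp_add]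
    have h3 : Real.exp (ε * s) ≤ Real.exp (ε * (k:ℝ)) := by
      apply Real.exp_le_exp.2; nlinarith
    calc Real.exp (-(ε * t)) * Real.exp (ε * s) * M₁
        ≤ Real.exp (-(ε * t)) * Real.exp (ε * (k:ℝ)) * M₁ := by gcongr
      _ = M₁ * Real.exp (ε * (k:ℝ)) * Real.exp (-(ε * t)) := by ring
  calc |exp (t • A) i j| ≤ ‖exp (t • Ac)‖ := hentry
    _ ≤ Real.exp (-(ε*k)) ^ q * M₁ := hnorm
    _ ≤ M₁ * Real.exp (ε * (k:ℝ)) * Real.exp (-(ε * t)) := hbound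

/-- Derivative (in slope form) of the Gramian integrand. -/
lemma slope_G_aux {N m : ℕ} (A : Matrix (Fin N) (Fin N) ℝ) (B : Matrix (Fin N) (Fin m) ℝ)
    (t : ℝ) :
    Filter.Tendsto
      (slope (fun u : ℝ => exp (u • A) * B * Bᵀ * exp (u • Aᵀ)) t) (nhdsWithin t {t}ᶜ)
      (nhds (A * (exp (t • A) * B * Bᵀ * exp (t • Aᵀ)) +
        (exp (t • A) * B * Bᵀ * exp (t • Aᵀ)) * Aᵀ)) := by
  have h1 := hasDerivAt_exp_smul_const' (𝕂 := ℝ) A t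
  have h2 := hasDerivAt_exp_smul_const (𝕂 := ℝ) Aᵀ t
  have h3 := (h1.mul_const (B * Bᵀ)).mul h2
  have hfun : (fun u : ℝ => exp (u • A) * B * Bᵀ * exp (u • Aᵀ))
      = fun u : ℝ => exp (u • A) * (B * Bᵀ) * exp (u • Aᵀ) := by
    funext u; rw [Matrix.mul_assoc (exp (u • A)) B Bᵀ]
  have hval : A * (exp (t • A) * B * Bᵀ * exp (t • Aᵀ)) +
        (exp (t • A) * B * Bᵀ * exp (t • Aᵀ)) * Aᵀ
      = A * exp (t • A) * (B * Bᵀ) * exp (t • Aᵀ) +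
        exp (t • A) * (B * Bᵀ) * (exp (t • Aᵀ) * Aᵀ) := by
    simp only [Matrix.mul_assoc]
  have h5 : HasDerivAt (fun u : ℝ => exp (u • A) * B * Bᵀ * exp (u • Aᵀ))
      (A * (exp (t • A) * B * Bᵀ * exp (t • Aᵀ)) +
        (exp (t • A) * B * Bᵀ * exp (t • Aᵀ)) * Aᵀ) t := by
    rw [hfun, hval]; exact h3
  replace h5 := hasDerivAt_iff_tendsto_slope.mp h5
  exact h5

end AuxiliaryLemmas

attribute [local instance] Matrix.normedAddCommGroup Matrix.normedSpace

/-- A real square matrix is Hurwitz if every eigenvalue of it, regarded as a complex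
matrix, has negative real part. -/
def Matrix.IsHurwitz {N : ℕ} (A : Matrix (Fin N) (Fin N) ℝ) : Prop :=
  ∀ μ ∈ spectrum ℂ (A.map (Complex.ofReal)), μ.re < 0

/-- For a Hurwitz matrix `A` and any `B`, the function
`t ↦ e^{tA} B Bᵀ e^{tAᵀ}` is integrable on `[0,∞)`, and the controllability Gramian
`P = ∫₀^∞ e^{tA} B Bᵀ e^{tAᵀ} dt` is symmetric positive semidefinite and satisfies the
Lyapunov equation `A P + P Aᵀ = -B Bᵀ`. -/
theorem gramian_integrable_posSemidef_lyapunov {N m : ℕ}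
    (A : Matrix (Fin N) (Fin N) ℝ) (B : Matrix (Fin N) (Fin m) ℝ)
    (hA : A.IsHurwitz) :
    @IntegrableOn _ _ _ _ SeminormedAddGroup.toContinuousENorm
      (fun t : ℝ =>
        NormedSpace.exp (t • A) * B * Bᵀ * NormedSpace.exp (t • Aᵀ)) (Set.Ici 0) volume ∧
    (∫ t in Set.Ici (0 : ℝ),
        NormedSpace.exp (t • A) * B * Bᵀ * NormedSpace.exp (t • Aᵀ)).IsSymm ∧
    (∫ t in Set.Ici (0 : ℝ),
        NormedSpace.exp (t • A) * B * Bᵀ * NormedSpace.exp (t • Aᵀ)).PosSemidef ∧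
    A * (∫ t in Set.Ici (0 : ℝ),
          NormedSpace.exp (t • A) * B * Bᵀ * NormedSpace.exp (t • Aᵀ)) +
      (∫ t in Set.Ici (0 : ℝ),
          NormedSpace.exp (t • A) * B * Bᵀ * NormedSpace.exp (t • Aᵀ)) * Aᵀ
      = -(B * Bᵀ) := by
  obtain ⟨c, C, hc, hC, hdecay⟩ := exp_entry_decay_aux A hA
  set G : ℝ → Matrix (Fin N) (Fin N) ℝ :=
    fun t => NormedSpace.exp (t • A) * B * Bᵀ * NormedSpace.exp (t • Aᵀ) with hGdef
  have hE' : ∀ t : ℝ, exp (t • Aᵀ) = (exp (t • A))ᵀ := fun t => by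
    rw [← Matrix.transpose_smul, Matrix.exp_transpose]
  have hGderiv : ∀ t : ℝ, HasDerivAt G (A * G t + G t * Aᵀ) t := fun t =>
    hasDerivAt_iff_tendsto_slope.mpr (slope_G_aux A B t)
  have hGcont : Continuous G := continuous_iff_continuousAt.2 fun t => (hGderiv t).continuousAt
  have htrans : ∀ t : ℝ, (G t)ᵀ = G t := by
    intro t
    simp only [hGdef, hE']
    simp only [Matrix.transpose_mul, Matrix.transpose_transpose, Matrix.mul_assoc]
  have hpsd : ∀ t : ℝ, (G t).PosSemidef := by
    intro t
    have h1 : G t = (exp (t • A) * B) * (exp (t • A) * B)ᴴ := by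
      rw [Matrix.conjTranspose_eq_transpose_of_trivial, Matrix.transpose_mul]
      simp only [hGdef, hE', Matrix.mul_assoc]
    rw [h1]
    exact Matrix.posSemidef_self_mul_conjTranspose _
  -- quantitative norm bound
  set D := B * Bᵀ with hDdef
  set S := ∑ l : Fin N, ∑ k : Fin N, |D k l| with hSdef
  have hS0 : 0 ≤ S := Finset.sum_nonneg fun l _ => Finset.sum_nonneg fun k _ => abs_nonneg _
  set K := C * C * S with hKdef
  have hK0 : 0 ≤ K := by positivity
  have hbound : ∀ t : ℝ, 0 ≤ t → ‖G t‖ ≤ K * Real.exp (-(2 * c) * t) := by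
    intro t ht
    rw [Matrix.norm_le_iff (by positivity)]
    intro i j
    set e := Real.exp (-(c * t)) with hedef
    have he0 : 0 ≤ e := (Real.exp_pos _).le
    have hGt : G t = exp (t • A) * D * exp (t • Aᵀ) := by
      simp only [hGdef, hDdef, Matrix.mul_assoc]
    have h1 : ∀ l, |(exp (t • A) * D) i l| ≤ C * e * ∑ k, |D k l| := by
      intro l
      rw [Matrix.mul_apply]
      refine le_trans (Finset.abs_sum_le_sum_abs _ _) ?_
      rw [Finset.mul_sum]
      refine Finset.sum_le_sum fun k _ => ?_
      rw [abs_mul]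
      exact mul_le_mul_of_nonneg_right (hdecay t ht i k) (abs_nonneg _)
    have h2 : ∀ l, |(exp (t • Aᵀ)) l j| ≤ C * e := by
      intro l
      rw [hE', Matrix.transpose_apply]
      exact hdecay t ht j l
    have habs : |(G t) i j| ≤ (C * e) * (C * e) * S := by
      calc |(G t) i j|
          = |∑ l, (exp (t • A) * D) i l * (exp (t • Aᵀ)) l j| := by
            rw [hGt, Matrix.mul_apply]
        _ ≤ ∑ l, |(exp (t • A) * D) i l| * |(exp (t • Aᵀ)) l j| := by
            refine le_trans (Finset.abs_sum_le_sum_abs _ _) ?_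
            exact le_of_eq (Finset.sum_congr rfl fun l _ => abs_mul _ _)
        _ ≤ ∑ l, (C * e * ∑ k, |D k l|) * (C * e) :=
            Finset.sum_le_sum fun l _ => mul_le_mul (h1 l) (h2 l) (abs_nonneg _) (by positivity)
        _ = ∑ l, (C * e) * (C * e) * (∑ k, |D k l|) :=
            Finset.sum_congr rfl fun l _ => by ring
        _ = (C * e) * (C * e) * S := by rw [hSdef, Finset.mul_sum]
    have hee : e * e = Real.exp (-(2 * c) * t) := by
      rw [hedef, ← Real.exp_add]; ring_nf
    calc ‖(G t) i j‖ = |(G t) i j| := Real.norm_eq_abs _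
      _ ≤ (C * e) * (C * e) * S := habs
      _ = K * (e * e) := by rw [hKdef]; ring
      _ = K * Real.exp (-(2 * c) * t) := by rw [hee]
  have hIci : @IntegrableOn _ _ _ _ SeminormedAddGroup.toContinuousENorm G (Set.Ici 0) volume := by
    have hg : IntegrableOn (fun t => K * Real.exp (-(2 * c) * t)) (Set.Ici (0:ℝ)) := by
      rw [integrableOn_Ici_iff_integrableOn_Ioi]
      exact (exp_neg_integrableOn_Ioi 0 (by positivity)).const_mul K
    haveI : TopologicalSpace.PseudoMetrizableSpace (Matrix (Fin N) (Fin N) ℝ) :=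
      inferInstanceAs (TopologicalSpace.PseudoMetrizableSpace (Fin N → Fin N → ℝ))
    refine Integrable.mono' hg hGcont.aestronglyMeasurable ?_
    rw [ae_restrict_iff' measurableSet_Ici]
    filter_upwards with t ht
    exact hbound t ht
  have hIoi : @IntegrableOn _ _ _ _ SeminormedAddGroup.toContinuousENorm G (Set.Ioi 0) volume := hIci.mono_set Set.Ioi_subset_Ici_self
  let L1 : Matrix (Fin N) (Fin N) ℝ →L[ℝ] Matrix (Fin N) (Fin N) ℝ :=
    (LinearMap.mulLeft ℝ A).toContinuousLinearMap
  let L2 : Matrix (Fin N) (Fin N) ℝ →L[ℝ] Matrix (Fin N) (Fin N) ℝ :=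
    (LinearMap.mulRight ℝ Aᵀ).toContinuousLinearMap
  have hL1 : ∀ M, L1 M = A * M := fun M => rfl
  have hL2 : ∀ M, L2 M = M * Aᵀ := fun M => rfl
  have hD1 : @Integrable _ _ SeminormedAddGroup.toContinuousENorm _ _ (fun t => A * G t) (volume.restrict (Set.Ioi (0:ℝ))) := by
    exact L1.integrable_comp hIoi
  have hD2 : @Integrable _ _ SeminormedAddGroup.toContinuousENorm _ _ (fun t => G t * Aᵀ) (volume.restrict (Set.Ioi (0:ℝ))) := by
    exact L2.integrable_comp hIoi
  have hDint : @IntegrableOn _ _ _ _ SeminormedAddGroup.toContinuousENorm (fun t => A * G t + G t * Aᵀ) (Set.Ioi 0) volume := hD1.add hD2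
  have hlim : Tendsto G atTop (nhds (0 : Matrix (Fin N) (Fin N) ℝ)) := by
    apply squeeze_zero_norm' ((eventually_ge_atTop (0:ℝ)).mono fun t ht => hbound t ht)
    have h0 : Tendsto (fun t : ℝ => (2 * c) * t) atTop atTop :=
      Tendsto.const_mul_atTop (by positivity) tendsto_id
    have h1 : Tendsto (fun t : ℝ => -(2 * c) * t) atTop atBot := by
      have heq : (fun t : ℝ => -(2 * c) * t) = (Neg.neg ∘ fun t : ℝ => 2 * c * t) := by
        funext t; simp [neg_mul]
      rw [heq]; exact tendsto_neg_atTop_atBot.comp h0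
    have h2 : Tendsto (fun t : ℝ => Real.exp (-(2 * c) * t)) atTop (nhds 0) :=
      Real.tendsto_exp_atBot.comp h1
    simpa using h2.const_mul K
  have hFTC := integral_Ioi_of_hasDerivAt_of_tendsto (a := (0:ℝ)) (f := G)
      (f' := fun t => A * G t + G t * Aᵀ) (hGcont.continuousWithinAt)
      (fun x _ => hGderiv x) hDint hlim
  have hG0 : G 0 = B * Bᵀ := by
    show exp ((0:ℝ) • A) * B * Bᵀ * exp ((0:ℝ) • Aᵀ) = B * Bᵀ
    rw [zero_smul, zero_smul, exp_zero, Matrix.one_mul, Matrix.mul_one]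
  have hPIoi : (∫ t in Set.Ici (0:ℝ), G t) = ∫ t in Set.Ioi (0:ℝ), G t :=
    integral_Ici_eq_integral_Ioi
  have hint_comm1 : (∫ t in Set.Ioi (0:ℝ), A * G t) = A * ∫ t in Set.Ioi (0:ℝ), G t := by
    exact L1.integral_comp_comm hIoi
  have hint_comm2 : (∫ t in Set.Ioi (0:ℝ), G t * Aᵀ) = (∫ t in Set.Ioi (0:ℝ), G t) * Aᵀ := by
    exact L2.integral_comp_comm hIoi
  have hlyap : A * (∫ t in Set.Ici (0:ℝ), G t) + (∫ t in Set.Ici (0:ℝ), G t) * Aᵀ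
      = -(B * Bᵀ) := by
    rw [hPIoi, ← hint_comm1, ← hint_comm2, ← integral_add hD1 hD2]
    rw [hFTC, hG0, zero_sub]
  have hsymm : (∫ t in Set.Ici (0:ℝ), G t).IsSymm := by
    rw [Matrix.IsSymm]
    let LT : Matrix (Fin N) (Fin N) ℝ →L[ℝ] Matrix (Fin N) (Fin N) ℝ :=
      ((Matrix.transposeLinearEquiv (Fin N) (Fin N) ℝ ℝ).toLinearMap).toContinuousLinearMap
    have hLT : ∀ M : Matrix (Fin N) (Fin N) ℝ, LT M = Mᵀ := fun M => rfl
    calc (∫ t in Set.Ici (0:ℝ), G t)ᵀ = LT (∫ t in Set.Ici (0:ℝ), G t) :=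
          (hLT _).symm
      _ = ∫ t in Set.Ici (0:ℝ), LT (G t) := (LT.integral_comp_comm hIci).symm
      _ = ∫ t in Set.Ici (0:ℝ), G t := by
          refine integral_congr_ae (Filter.Eventually.of_forall fun t => ?_)
          show LT (G t) = G t
          rw [hLT, htrans]
  refine ⟨hIci, hsymm, posSemidef_iff_dotProduct_mulVec.mpr ⟨?_, ?_⟩, hlyap⟩
  · rw [Matrix.IsHermitian, Matrix.conjTranspose_eq_transpose_of_trivial]
    exact hsymm
  · intro x
    let Lq : Matrix (Fin N) (Fin N) ℝ →ₗ[ℝ] ℝ :=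
      { toFun := fun M => dotProduct (star x) (M *ᵥ x)
        map_add' := fun M M' => by
          show dotProduct (star x) ((M + M') *ᵥ x) = _
          rw [Matrix.add_mulVec, dotProduct_add]
        map_smul' := fun r M => by
          show dotProduct (star x) ((r • M) *ᵥ x) = _
          rw [Matrix.smul_mulVec, dotProduct_smul, smul_eq_mul]; rfl }
    let LqC := Lq.toContinuousLinearMap
    have hLq : ∀ M : Matrix (Fin N) (Fin N) ℝ, LqC M = dotProduct (star x) (M *ᵥ x) :=
      fun M => rfl
    calc (0:ℝ) ≤ ∫ t in Set.Ici (0:ℝ), dotProduct (star x) ((G t) *ᵥ x) :=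
          setIntegral_nonneg measurableSet_Ici fun t _ => (hpsd t).dotProduct_mulVec_nonneg x
      _ = ∫ t in Set.Ici (0:ℝ), LqC (G t) := by
          refine integral_congr_ae (Filter.Eventually.of_forall fun t => ?_)
          show dotProduct (star x) ((G t) *ᵥ x) = LqC (G t)
          rw [hLq]
      _ = LqC (∫ t in Set.Ici (0:ℝ), G t) := LqC.integral_comp_comm hIci
      _ = dotProduct (star x) ((∫ t in Set.Ici (0:ℝ), G t) *ᵥ x) := hLq _
end

section
/- Let A be a real N×N Hurwitz matrix. If X and Y are real N×N matrices satisfying A X + X Aᵀ = A Y + Y Aᵀ, then X = Y. In particular, for any real N×m matrix B the Lyapunov equation A P + P Aᵀ = −B Bᵀ has at most one solution P. -/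
open Matrix Polynomial

section aux

variable {N : ℕ}

lemma charpoly_eval_eq (M : Matrix (Fin N) (Fin N) ℂ) (μ : ℂ) :
    M.charpoly.eval μ = (Matrix.scalar (Fin N) μ - M).det := by
  rw [Matrix.charpoly, _root_.eval_det, Matrix.matPolyEquiv_charmatrix]
  congr 1
  simp

lemma mem_spectrum_iff_root (M : Matrix (Fin N) (Fin N) ℂ) (μ : ℂ) :
    μ ∈ spectrum ℂ M ↔ M.charpoly.IsRoot μ := by
  rw [spectrum.mem_iff]
  have h : (algebraMap ℂ (Matrix (Fin N) (Fin N) ℂ)) μ = Matrix.scalar (Fin N) μ := rfl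
  rw [h, Polynomial.IsRoot, charpoly_eval_eq, Matrix.isUnit_iff_isUnit_det,
    isUnit_iff_ne_zero, not_not]

lemma lyap_inj (A : Matrix (Fin N) (Fin N) ℝ) (hA : A.IsHurwitz)
    (X Y : Matrix (Fin N) (Fin N) ℝ)
    (hXY : A * X + X * Aᵀ = A * Y + Y * Aᵀ) : X = Y := by
  rcases Nat.eq_zero_or_pos N with hN | hN
  · subst hN; exact Subsingleton.elim X Y
  have h : A * (X - Y) + (X - Y) * Aᵀ = 0 := by
    have e : A * (X - Y) + (X - Y) * Aᵀ = (A * X + X * Aᵀ) - (A * Y + Y * Aᵀ) := by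
      noncomm_ring
    rw [e, hXY, sub_self]
  set φ : Matrix (Fin N) (Fin N) ℝ →+* Matrix (Fin N) (Fin N) ℂ :=
    Complex.ofRealHom.mapMatrix with hφ
  set M : Matrix (Fin N) (Fin N) ℂ := A.map Complex.ofReal with hM
  set Z : Matrix (Fin N) (Fin N) ℂ := (X - Y).map Complex.ofReal with hZdef
  have hZero : M * Z + Z * Mᵀ = 0 := by
    show φ A * φ (X - Y) + φ (X - Y) * (φ A)ᵀ = 0
    have ht : (φ A)ᵀ = φ Aᵀ := rfl
    rw [ht, ← _root_.map_mul φ, ← _root_.map_mul φ, ← _root_.map_add φ, h, map_zero]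
  have hkey : M * Z = Z * (-Mᵀ) := by
    rw [Matrix.mul_neg]
    exact eq_neg_of_add_eq_zero_left hZero
  have hpoly : ∀ p : ℂ[X], (aeval M p) * Z = Z * (aeval (-Mᵀ) p) := by
    intro p
    induction p using Polynomial.induction_on with
    | C c => simp [Algebra.algebraMap_eq_smul_one, smul_mul_assoc, mul_smul_comm]
    | add p q hp hq => simp only [map_add, add_mul, mul_add, hp, hq]
    | monomial n c hc =>
      have e1 : (aeval M) (C c * Polynomial.X ^ (n + 1)) =
          (aeval M) (C c * Polynomial.X ^ n) * M := by
        simp [pow_succ, mul_assoc]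
      have e2 : (aeval (-Mᵀ)) (C c * Polynomial.X ^ (n + 1)) =
          (aeval (-Mᵀ)) (C c * Polynomial.X ^ n) * (-Mᵀ) := by
        simp [pow_succ, mul_assoc]
      rw [e1, e2, mul_assoc, hkey, ← mul_assoc, hc, mul_assoc]
  have hCH : Z * (aeval (-Mᵀ) M.charpoly) = 0 := by
    rw [← hpoly, Matrix.aeval_self_charpoly, zero_mul]
  have hspecT : ∀ μ : ℂ, μ ∈ spectrum ℂ (-Mᵀ) → 0 < μ.re := by
    intro μ hμ
    rw [mem_spectrum_iff_root, Polynomial.IsRoot, charpoly_eval_eq] at hμ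
    have e : (Matrix.scalar (Fin N) μ - -Mᵀ) = (-(Matrix.scalar (Fin N) (-μ) - M))ᵀ := by
      ext i j
      rcases eq_or_ne i j with hij | hij
      · subst hij
        simp [Matrix.scalar_apply, Matrix.diagonal_apply, Matrix.transpose_apply]
        ring
      · simp [Matrix.scalar_apply, Matrix.diagonal_apply, Matrix.transpose_apply, hij,
          Ne.symm hij]
    rw [e, Matrix.det_transpose, Matrix.det_neg] at hμ
    have hroot : M.charpoly.IsRoot (-μ) := by
      rw [Polynomial.IsRoot, charpoly_eval_eq]
      rcases mul_eq_zero.mp hμ with h' | h'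
      · exact absurd h' (by simp)
      · exact h'
    have := hA (-μ) ((mem_spectrum_iff_root M (-μ)).mpr hroot)
    simp only [Complex.neg_re] at this
    linarith
  have hdeg : 0 < M.charpoly.degree := by
    rw [Matrix.charpoly_degree_eq_dim, Fintype.card_fin]
    exact_mod_cast hN
  have hunit : IsUnit (aeval (-Mᵀ) M.charpoly) := by
    rw [← spectrum.zero_notMem_iff ℂ,
      spectrum.map_polynomial_aeval_of_degree_pos (-Mᵀ) M.charpoly hdeg]
    rintro ⟨μ, hμ, heq⟩
    have h1 : 0 < μ.re := hspecT μ hμ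
    have h2 : μ ∈ spectrum ℂ M := (mem_spectrum_iff_root M μ).mpr heq
    have := hA μ h2
    linarith
  obtain ⟨u, hu⟩ := hunit
  have h1 : (aeval (-Mᵀ) M.charpoly) * ((↑u⁻¹ : Matrix (Fin N) (Fin N) ℂ)) = 1 := by
    rw [← hu]; exact u.mul_inv
  have hZ0 : Z = 0 := by
    calc Z = Z * ((aeval (-Mᵀ) M.charpoly) * ((↑u⁻¹ : Matrix (Fin N) (Fin N) ℂ))) := by
            rw [h1, mul_one]
      _ = (Z * (aeval (-Mᵀ) M.charpoly)) * ((↑u⁻¹ : Matrix (Fin N) (Fin N) ℂ)) :=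
            (mul_assoc _ _ _).symm
      _ = 0 := by rw [hCH, zero_mul]
  have hsub : X - Y = 0 := by
    ext i j
    have := congrFun (congrFun hZ0 i) j
    have h2 : (↑(X i j) : ℂ) - ↑(Y i j) = 0 := by
      simpa [hZdef, Matrix.map_apply] using this
    exact_mod_cast h2
  exact sub_eq_zero.mp hsub

end aux

/-- For a Hurwitz matrix `A`, the Lyapunov operator `X ↦ A X + X Aᵀ` is
injective: if `A X + X Aᵀ = A Y + Y Aᵀ` then `X = Y`.  In particular, for any `B` the
Lyapunov equation `A P + P Aᵀ = -B Bᵀ` has at most one solution. -/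
theorem lyapunov_solution_unique {N : ℕ}
    (A : Matrix (Fin N) (Fin N) ℝ) (hA : A.IsHurwitz)
    (X Y : Matrix (Fin N) (Fin N) ℝ)
    (hXY : A * X + X * Aᵀ = A * Y + Y * Aᵀ) :
    X = Y ∧
      ∀ (m : ℕ) (B : Matrix (Fin N) (Fin m) ℝ) (P₁ P₂ : Matrix (Fin N) (Fin N) ℝ),
        A * P₁ + P₁ * Aᵀ = -(B * Bᵀ) → A * P₂ + P₂ * Aᵀ = -(B * Bᵀ) → P₁ = P₂ := by
  exact ⟨lyap_inj A hA X Y hXY, fun m B P₁ P₂ h1 h2 => lyap_inj A hA P₁ P₂ (h1.trans h2.symm)⟩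
end

section
/- Let A be a real N×N Hurwitz matrix, B a real N×m matrix, C a real p×N matrix, and let u : [0,∞) → ℝ^m be measurable with ∫₀^∞ ‖u(s)‖₂² ds < ∞. Define the output y(t) = ∫₀^t C e^{(t−s)A} B u(s) ds. Then for every t ≥ 0, ‖y(t)‖₂ ≤ (∫₀^∞ ‖C e^{τA} B‖_F² dτ)^{1/2} · (∫₀^∞ ‖u(s)‖₂² ds)^{1/2}; that is, the L^∞-norm of the output is bounded by the H₂-norm of the transfer function times the L²-norm of the input. -/
open Matrix MeasureTheory

/-- The squared Frobenius norm of a real matrix: `‖M‖_F² = trace (Mᵀ M)`. -/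
noncomputable def frobSq {p m : ℕ} (M : Matrix (Fin p) (Fin m) ℝ) : ℝ :=
  Matrix.trace (Mᵀ * M)

open scoped ENNReal NNReal Pointwise

section Aux
open NormedSpace Polynomial

attribute [local instance] Matrix.linftyOpNormedAddCommGroup Matrix.linftyOpNormedRing
  Matrix.linftyOpNormedAlgebra

variable {n : ℕ}

lemma exp_eq_aeval (M : Matrix (Fin n) (Fin n) ℂ) :
    ∃ p : ℂ[X], NormedSpace.exp M = aeval M p := by
  have hmem : NormedSpace.exp M ∈ Algebra.adjoin ℂ ({M} : Set _) := by
    have hclosed : IsClosed ((Subalgebra.toSubmodule (Algebra.adjoin ℂ ({M} : Set _)) :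
        Submodule ℂ _) : Set (Matrix (Fin n) (Fin n) ℂ)) :=
      Submodule.closed_of_finiteDimensional _
    have hsum : HasSum (fun k : ℕ => (k.factorial : ℂ)⁻¹ • M ^ k) (NormedSpace.exp M) := by
      rw [NormedSpace.exp_eq_tsum ℂ]
      exact (NormedSpace.expSeries_summable' (𝕂 := ℂ) M).hasSum
    refine hclosed.mem_of_tendsto hsum (Filter.Eventually.of_forall fun s => ?_)
    exact Submodule.sum_mem _ fun k _ => Submodule.smul_mem _ _
      (Subalgebra.pow_mem _ (Algebra.self_mem_adjoin_singleton ℂ M) k)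
  rw [Algebra.adjoin_singleton_eq_range_aeval] at hmem
  obtain ⟨p, hp⟩ := hmem
  exact ⟨p, hp.symm⟩

lemma exists_eigvec {M : Matrix (Fin n) (Fin n) ℂ} {μ : ℂ} (hμ : μ ∈ spectrum ℂ M) :
    ∃ v : Fin n → ℂ, v ≠ 0 ∧ M.mulVec v = μ • v := by
  rw [spectrum.mem_iff] at hμ
  have hdet : (μ • (1 : Matrix (Fin n) (Fin n) ℂ) - M).det = 0 := by
    by_contra h
    exact hμ (by
      rw [Matrix.isUnit_iff_isUnit_det]
      · simpa [Algebra.algebraMap_eq_smul_one] using isUnit_iff_ne_zero.mpr h)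
  obtain ⟨v, hv0, hv⟩ := (Matrix.exists_mulVec_eq_zero_iff).mpr hdet
  refine ⟨v, hv0, ?_⟩
  have := hv
  rw [Matrix.sub_mulVec, sub_eq_zero] at this
  rw [← this, Matrix.smul_mulVec, Matrix.one_mulVec]


/-- Applying a matrix (as `mulVec`) is linear in the matrix. -/
noncomputable def mulVecL (v : Fin n → ℂ) : Matrix (Fin n) (Fin n) ℂ →ₗ[ℂ] (Fin n → ℂ) where
  toFun M := M.mulVec v
  map_add' M N := Matrix.add_mulVec M N v
  map_smul' c M := Matrix.smul_mulVec c M v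

lemma pow_mulVec {M : Matrix (Fin n) (Fin n) ℂ} {μ : ℂ} {v : Fin n → ℂ}
    (hv : M.mulVec v = μ • v) (k : ℕ) : (M ^ k).mulVec v = μ ^ k • v := by
  induction k with
  | zero => simp [Matrix.one_mulVec]
  | succ k ih =>
      rw [pow_succ, ← Matrix.mulVec_mulVec, hv, Matrix.mulVec_smul, ih, smul_smul, pow_succ,
        mul_comm]

lemma aeval_mulVec {M : Matrix (Fin n) (Fin n) ℂ} {μ : ℂ} {v : Fin n → ℂ}
    (hv : M.mulVec v = μ • v) (q : ℂ[X]) :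
    (aeval M q).mulVec v = eval μ q • v := by
  have h1 : aeval M q = ∑ k ∈ Finset.range (q.natDegree + 1), q.coeff k • M ^ k := by
    rw [aeval_eq_sum_range]
  have h2 : eval μ q = ∑ k ∈ Finset.range (q.natDegree + 1), q.coeff k * μ ^ k := by
    rw [eval_eq_sum_range]
  rw [h1, h2]
  change (mulVecL v) _ = _
  rw [map_sum]
  rw [Finset.sum_smul]
  refine Finset.sum_congr rfl fun k _ => ?_
  rw [LinearMap.map_smul]
  show q.coeff k • (M ^ k).mulVec v = _
  rw [pow_mulVec hv, smul_smul]

lemma exp_mulVec {M : Matrix (Fin n) (Fin n) ℂ} {μ : ℂ} {v : Fin n → ℂ}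
    (hv : M.mulVec v = μ • v) :
    (NormedSpace.exp M).mulVec v = Complex.exp μ • v := by
  have hsum : HasSum (fun k : ℕ => (k.factorial : ℂ)⁻¹ • M ^ k) (NormedSpace.exp M) := by
    rw [NormedSpace.exp_eq_tsum ℂ]
    exact (NormedSpace.expSeries_summable' (𝕂 := ℂ) M).hasSum
  have hL : HasSum (fun k : ℕ => (mulVecL v) ((k.factorial : ℂ)⁻¹ • M ^ k))
      ((mulVecL v) (NormedSpace.exp M)) :=
    hsum.mapL (mulVecL v).toContinuousLinearMap
  have heq : ∀ k : ℕ, (mulVecL v) ((k.factorial : ℂ)⁻¹ • M ^ k)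
      = ((k.factorial : ℂ)⁻¹ * μ ^ k) • v := by
    intro k
    rw [LinearMap.map_smul]
    show (k.factorial : ℂ)⁻¹ • (M ^ k).mulVec v = _
    rw [pow_mulVec hv, smul_smul]
  rw [funext heq] at hL
  have hsc : HasSum (fun k : ℕ => (k.factorial : ℂ)⁻¹ * μ ^ k) (Complex.exp μ) := by
    have hs := (NormedSpace.expSeries_summable' (𝕂 := ℂ) (𝔸 := ℂ) μ).hasSum
    have he : NormedSpace.exp μ = ∑' k : ℕ, (k.factorial : ℂ)⁻¹ • μ ^ k := by
      rw [NormedSpace.exp_eq_tsum ℂ]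
    rw [← he, ← Complex.exp_eq_exp_ℂ] at hs
    simpa [smul_eq_mul] using hs
  exact hL.unique (hsc.smul_const v)

lemma spectrum_exp_subset [NeZero n] (M : Matrix (Fin n) (Fin n) ℂ) :
    spectrum ℂ (NormedSpace.exp M) ⊆ Complex.exp '' spectrum ℂ M := by
  obtain ⟨q, hq⟩ := exp_eq_aeval M
  have hnonempty : (spectrum ℂ M).Nonempty :=
    spectrum.nonempty_of_isAlgClosed_of_finiteDimensional ℂ M
  rw [hq, spectrum.map_polynomial_aeval_of_nonempty M q hnonempty]
  rintro z ⟨μ, hμ, rfl⟩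
  refine ⟨μ, hμ, ?_⟩
  obtain ⟨v, hv0, hv⟩ := exists_eigvec hμ
  have h1 : (aeval M q).mulVec v = eval μ q • v := aeval_mulVec hv q
  have h2 : (aeval M q).mulVec v = Complex.exp μ • v := by rw [← hq]; exact exp_mulVec hv
  have := h1.symm.trans h2
  obtain ⟨i, hi⟩ := Function.ne_iff.mp hv0
  have := congrFun this i
  simp only [Pi.smul_apply, smul_eq_mul] at this
  exact (mul_right_cancel₀ hi this).symm

lemma norm_one_le_decay {N : ℕ} [NeZero N] (Mc : Matrix (Fin N) (Fin N) ℂ)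
    (hsp : ∀ μ ∈ spectrum ℂ Mc, μ.re < 0) :
    ∃ K α : ℝ, 0 < K ∧ 0 < α ∧ ∀ t : ℝ, 0 ≤ t →
      ‖NormedSpace.exp (t • Mc)‖ ≤ K * Real.exp (-α * t) := by
  haveI : Nonempty (Fin N) := Fin.pos_iff_nonempty.mp (Nat.pos_of_ne_zero (NeZero.ne N))
  -- maximal real part
  have hne : (spectrum ℂ Mc).Nonempty :=
    spectrum.nonempty_of_isAlgClosed_of_finiteDimensional ℂ Mc
  obtain ⟨lam0, hlam0, hmax⟩ := (spectrum.isCompact (a := Mc)).exists_isMaxOn hne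
    Complex.continuous_re.continuousOn
  set α : ℝ := -lam0.re with hαdef
  have hαpos : 0 < α := by simpa [hαdef] using hsp lam0 hlam0
  -- the shifted matrix
  set D : Matrix (Fin N) (Fin N) ℂ := Mc + ((α / 2 : ℝ) : ℂ) • 1 with hD
  have hspD : ∀ μ ∈ spectrum ℂ D, μ.re ≤ -(α / 2) := by
    intro μ hμ
    have : μ ∈ ({((α / 2 : ℝ) : ℂ)} : Set ℂ) + spectrum ℂ Mc := by
      rw [spectrum.singleton_add_eq]
      rwa [Algebra.algebraMap_eq_smul_one, add_comm]
    obtain ⟨a, ha, b, hb, rfl⟩ := this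
    rcases Set.mem_singleton_iff.mp ha with rfl
    have hb' : b.re ≤ lam0.re := hmax hb
    simp only [Complex.add_re, Complex.ofReal_re]
    linarith
  set F : Matrix (Fin N) (Fin N) ℂ := NormedSpace.exp D with hF
  -- spectral radius of F is < 1
  have hrad : spectralRadius ℂ F < 1 := by
    have hsub := spectrum_exp_subset D
    have hr : ∀ z ∈ spectrum ℂ F, (‖z‖₊ : ℝ≥0∞) ≤ ENNReal.ofReal (Real.exp (-(α / 2))) := by
      intro z hz
      obtain ⟨μ, hμ, rfl⟩ := hsub hz
      have : ‖Complex.exp μ‖ = Real.exp μ.re := by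
        rw [Complex.norm_exp]
      have hle : ‖Complex.exp μ‖ ≤ Real.exp (-(α / 2)) := by
        rw [this]; exact Real.exp_le_exp.mpr (hspD μ hμ)
      rw [← ENNReal.ofReal_coe_nnreal, coe_nnnorm]
      exact ENNReal.ofReal_le_ofReal hle
    calc spectralRadius ℂ F ≤ ENNReal.ofReal (Real.exp (-(α / 2))) := iSup₂_le hr
      _ < 1 := by
          rw [← ENNReal.ofReal_one]
          exact ENNReal.ofReal_lt_ofReal_iff_of_nonneg (Real.exp_pos _).le |>.mpr
            (Real.exp_lt_one_iff.mpr (by linarith))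
  -- eventual bound on powers
  have htend := spectrum.pow_nnnorm_pow_one_div_tendsto_nhds_spectralRadius F
  have hev : ∀ᶠ (k : ℕ) in Filter.atTop, (‖F ^ k‖₊ : ℝ≥0∞) ^ (1 / (k : ℝ)) < 1 :=
    htend.eventually_lt_const hrad
  obtain ⟨n₀, hn₀⟩ := Filter.eventually_atTop.mp hev
  have hpowbdd : ∀ k : ℕ, k ≥ n₀ + 1 → ‖F ^ k‖ ≤ 1 := by
    intro k hk
    have hk0 : (k : ℝ) ≠ 0 := Nat.cast_ne_zero.mpr (by omega)
    have h1 := hn₀ k (by omega)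
    have h2 : (‖F ^ k‖₊ : ℝ≥0∞) = ((‖F ^ k‖₊ : ℝ≥0∞) ^ (1 / (k : ℝ))) ^ (k : ℝ) := by
      rw [← ENNReal.rpow_mul, one_div, inv_mul_cancel₀ hk0, ENNReal.rpow_one]
    have h3 : (‖F ^ k‖₊ : ℝ≥0∞) ≤ 1 := by
      rw [h2]
      calc ((‖F ^ k‖₊ : ℝ≥0∞) ^ (1 / (k : ℝ))) ^ (k : ℝ) ≤ (1 : ℝ≥0∞) ^ (k : ℝ) :=
            ENNReal.rpow_le_rpow h1.le (Nat.cast_nonneg k)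
        _ = 1 := ENNReal.one_rpow _
    have h4 : ‖F ^ k‖₊ ≤ 1 := by exact_mod_cast h3
    exact h4
  -- all powers bounded
  set K₀ : ℝ := 1 + ∑ j ∈ Finset.range (n₀ + 1), ‖F ^ j‖ with hK₀
  have hK₀1 : (1 : ℝ) ≤ K₀ := by
    rw [hK₀]
    have : (0 : ℝ) ≤ ∑ j ∈ Finset.range (n₀ + 1), ‖F ^ j‖ :=
      Finset.sum_nonneg fun _ _ => norm_nonneg _
    linarith
  have hK₀ : ∀ k : ℕ, ‖F ^ k‖ ≤ K₀ := by
    intro k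
    rcases le_or_gt (n₀ + 1) k with hk | hk
    · exact (hpowbdd k hk).trans hK₀1
    · have : ‖F ^ k‖ ≤ ∑ j ∈ Finset.range (n₀ + 1), ‖F ^ j‖ :=
        Finset.single_le_sum (f := fun j => ‖F ^ j‖) (fun _ _ => norm_nonneg _)
          (Finset.mem_range.mpr hk)
      linarith
  -- bound on [0,1]
  have hcont : Continuous fun r : ℝ => ‖NormedSpace.exp (r • D)‖ :=
    (NormedSpace.exp_continuous.comp (continuous_id.smul continuous_const)).norm
  obtain ⟨x₁, hx₁, hmax₁⟩ := (isCompact_Icc (a := (0:ℝ)) (b := 1)).exists_isMaxOn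
    ⟨0, by norm_num⟩ hcont.continuousOn
  set K₁ : ℝ := ‖NormedSpace.exp (x₁ • D)‖ with hK₁def
  have hK₁1 : (1 : ℝ) ≤ K₁ := by
    have h0 : ‖NormedSpace.exp ((0:ℝ) • D)‖ ≤ K₁ := hmax₁ (by norm_num)
    simpa [NormedSpace.exp_zero] using h0
  -- bound for exp (t • D), t ≥ 0
  have hexpD : ∀ t : ℝ, 0 ≤ t → ‖NormedSpace.exp (t • D)‖ ≤ K₀ * K₁ := by
    intro t ht
    have hsplit : t • D = ((⌊t⌋₊ : ℝ)) • D + (t - ⌊t⌋₊) • D := by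
      rw [← add_smul]; ring_nf
    have hcomm : Commute (((⌊t⌋₊ : ℝ)) • D) ((t - ⌊t⌋₊) • D) :=
      ((Commute.refl D).smul_left _).smul_right _
    rw [hsplit, Matrix.exp_add_of_commute _ _ hcomm]
    have h1 : NormedSpace.exp (((⌊t⌋₊ : ℝ)) • D) = F ^ ⌊t⌋₊ := by
      rw [hF, ← Matrix.exp_nsmul, Nat.cast_smul_eq_nsmul ℝ]
    have h2 : ‖NormedSpace.exp ((t - ⌊t⌋₊) • D)‖ ≤ K₁ := by
      refine hmax₁ ?_
      constructor
      · exact sub_nonneg.mpr (Nat.floor_le ht)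
      · have := Nat.lt_floor_add_one t
        linarith
    calc ‖NormedSpace.exp (((⌊t⌋₊ : ℝ)) • D) * NormedSpace.exp ((t - ⌊t⌋₊) • D)‖
        ≤ ‖NormedSpace.exp (((⌊t⌋₊ : ℝ)) • D)‖ * ‖NormedSpace.exp ((t - ⌊t⌋₊) • D)‖ :=
          norm_mul_le _ _
      _ ≤ K₀ * K₁ := by
          refine mul_le_mul ?_ h2 (norm_nonneg _) (by linarith)
          rw [h1]; exact hK₀ _
  -- final bound
  refine ⟨K₀ * K₁, α / 2, by nlinarith, by linarith, fun t ht => ?_⟩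
  have hsplit : t • Mc = t • D + ((-(t * (α / 2)) : ℝ) : ℂ) • 1 := by
    rw [hD, smul_add]
    have : t • (((α / 2 : ℝ) : ℂ) • (1 : Matrix (Fin N) (Fin N) ℂ))
        = (((t * (α / 2) : ℝ)) : ℂ) • (1 : Matrix (Fin N) (Fin N) ℂ) := by
      rw [← smul_assoc]
      congr 1
      rw [Complex.real_smul]
      push_cast
      ring
    rw [this, add_assoc, ← add_smul]
    have hz : ((t * (α / 2) : ℝ) : ℂ) + ((-(t * (α / 2)) : ℝ) : ℂ) = 0 := by push_cast; ring
    rw [hz, zero_smul, add_zero]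
  have hcomm : Commute (t • D) ((((-(t * (α / 2)) : ℝ)) : ℂ) • (1 : Matrix (Fin N) (Fin N) ℂ)) :=
    (Commute.one_right _).smul_right _
  rw [hsplit, Matrix.exp_add_of_commute _ _ hcomm]
  have hscalar : NormedSpace.exp ((((-(t * (α / 2)) : ℝ)) : ℂ) • (1 : Matrix (Fin N) (Fin N) ℂ))
      = Complex.exp (((-(t * (α / 2)) : ℝ)) : ℂ) • (1 : Matrix (Fin N) (Fin N) ℂ) := by
    rw [← Algebra.algebraMap_eq_smul_one, ← Algebra.algebraMap_eq_smul_one]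
    rw [Complex.exp_eq_exp_ℂ]
    exact (NormedSpace.map_exp (algebraMap ℂ (Matrix (Fin N) (Fin N) ℂ))
      (continuous_algebraMap _ _) _).symm
  rw [hscalar]
  have : NormedSpace.exp (t • D) * (Complex.exp (((-(t * (α / 2)) : ℝ)) : ℂ) • 1)
      = Complex.exp (((-(t * (α / 2)) : ℝ)) : ℂ) • NormedSpace.exp (t • D) := by
    rw [mul_smul_comm, mul_one]
  rw [this, norm_smul]
  have habs : ‖Complex.exp (((-(t * (α / 2)) : ℝ)) : ℂ)‖ = Real.exp (-(t * (α / 2))) := by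
    rw [Complex.norm_exp, Complex.ofReal_re]
  rw [habs]
  have := hexpD t ht
  calc Real.exp (-(t * (α / 2))) * ‖NormedSpace.exp (t • D)‖
      ≤ Real.exp (-(t * (α / 2))) * (K₀ * K₁) := by
        exact mul_le_mul_of_nonneg_left this (Real.exp_pos _).le
    _ = K₀ * K₁ * Real.exp (-(α / 2) * t) := by rw [mul_comm]; ring_nf

lemma norm_map_ofReal {a b : ℕ} (X : Matrix (Fin a) (Fin b) ℝ) :
    ‖X.map Complex.ofReal‖ = ‖X‖ := by
  rw [Matrix.linfty_opNorm_def, Matrix.linfty_opNorm_def]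
  congr 1
  refine Finset.sup_congr rfl fun i _ => ?_
  refine Finset.sum_congr rfl fun j _ => ?_
  simp [Matrix.map_apply]

lemma map_exp_smul {N : ℕ} (A : Matrix (Fin N) (Fin N) ℝ) (t : ℝ) :
    (NormedSpace.exp (t • A)).map Complex.ofReal
      = NormedSpace.exp (t • A.map Complex.ofReal) := by
  have hf : Continuous (fun X : Matrix (Fin N) (Fin N) ℝ => X.map Complex.ofReal) :=
    continuous_id.matrix_map Complex.continuous_ofReal
  have h1 := NormedSpace.map_exp (Complex.ofRealHom.mapMatrix :
      Matrix (Fin N) (Fin N) ℝ →+* Matrix (Fin N) (Fin N) ℂ) (by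
        exact hf) (t • A)
  have h2 : (Complex.ofRealHom.mapMatrix : Matrix (Fin N) (Fin N) ℝ →+*
      Matrix (Fin N) (Fin N) ℂ) (t • A) = t • A.map Complex.ofReal := by
    ext i j
    simp [RingHom.mapMatrix_apply, Matrix.map_apply, Complex.real_smul]
  rw [RingHom.mapMatrix_apply] at h1
  have : (NormedSpace.exp (t • A)).map (Complex.ofRealHom : ℝ → ℂ)
      = (NormedSpace.exp (t • A)).map Complex.ofReal := rfl
  exact this.symm.trans (h1.trans (congrArg _ h2))

lemma real_decay {N : ℕ} (A : Matrix (Fin N) (Fin N) ℝ) (hA : A.IsHurwitz) :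
    ∃ K α : ℝ, 0 < K ∧ 0 < α ∧ ∀ t : ℝ, 0 ≤ t →
      ‖NormedSpace.exp (t • A)‖ ≤ K * Real.exp (-α * t) := by
  rcases Nat.eq_zero_or_pos N with hN | hN
  · subst hN
    refine ⟨1, 1, one_pos, one_pos, fun t _ => ?_⟩
    have : ‖NormedSpace.exp (t • A)‖ = 0 := by
      rw [Matrix.linfty_opNorm_def]
      simp
    rw [this]
    positivity
  · haveI : NeZero N := ⟨Nat.pos_iff_ne_zero.mp hN⟩
    obtain ⟨K, α, hK, hα, hbd⟩ := norm_one_le_decay (A.map Complex.ofReal) hA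
    refine ⟨K, α, hK, hα, fun t ht => ?_⟩
    rw [← norm_map_ofReal, map_exp_smul]
    exact hbd t ht

lemma abs_entry_le_norm {a b : ℕ} (X : Matrix (Fin a) (Fin b) ℝ) (i : Fin a) (j : Fin b) :
    |X i j| ≤ ‖X‖ := by
  rw [Matrix.linfty_opNorm_def]
  have h1 : ‖X i j‖₊ ≤ ∑ j', ‖X i j'‖₊ :=
    Finset.single_le_sum (f := fun j' => ‖X i j'‖₊) (fun _ _ => by positivity) (Finset.mem_univ j)
  have h2 : (∑ j', ‖X i j'‖₊) ≤ (Finset.univ : Finset (Fin a)).sup fun i => ∑ j', ‖X i j'‖₊ :=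
    Finset.le_sup (f := fun i => ∑ j', ‖X i j'‖₊) (Finset.mem_univ i)
  calc |X i j| = (‖X i j‖₊ : ℝ) := by simp [Real.norm_eq_abs]
    _ ≤ _ := by exact_mod_cast h1.trans h2

lemma frobSq_eq {a b : ℕ} (M : Matrix (Fin a) (Fin b) ℝ) :
    frobSq M = ∑ j, ∑ i, (M i j) ^ 2 := by
  simp [frobSq, Matrix.trace, Matrix.diag, Matrix.mul_apply, sq]

lemma frobSq_nonneg {a b : ℕ} (M : Matrix (Fin a) (Fin b) ℝ) : 0 ≤ frobSq M := by
  rw [frobSq_eq]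
  exact Finset.sum_nonneg fun j _ => Finset.sum_nonneg fun i _ => sq_nonneg _

lemma frobSq_le {a b : ℕ} (M : Matrix (Fin a) (Fin b) ℝ) :
    frobSq M ≤ (a * b : ℕ) * ‖M‖ ^ 2 := by
  rw [frobSq_eq]
  calc ∑ j, ∑ i, (M i j) ^ 2 ≤ ∑ j : Fin b, ∑ i : Fin a, ‖M‖ ^ 2 := by
        refine Finset.sum_le_sum fun j _ => Finset.sum_le_sum fun i _ => ?_
        rw [← sq_abs]
        exact pow_le_pow_left₀ (abs_nonneg _) (abs_entry_le_norm M i j) 2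
    _ = (a * b : ℕ) * ‖M‖ ^ 2 := by
        simp [Finset.sum_const, mul_comm]
        ring

lemma mulVec_norm_le {a b : ℕ} (M : Matrix (Fin a) (Fin b) ℝ) (w : EuclideanSpace ℝ (Fin b)) :
    ‖(WithLp.equiv 2 (Fin a → ℝ)).symm (M.mulVec (WithLp.equiv 2 (Fin b → ℝ) w))‖
      ≤ Real.sqrt (frobSq M) * ‖w‖ := by
  set v : Fin b → ℝ := WithLp.equiv 2 (Fin b → ℝ) w with hv
  have hnorm : ‖(WithLp.equiv 2 (Fin a → ℝ)).symm (M.mulVec v)‖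
      = Real.sqrt (∑ i, (M.mulVec v i) ^ 2) := by
    rw [EuclideanSpace.norm_eq]
    congr 1
    refine Finset.sum_congr rfl fun i _ => ?_
    rw [WithLp.equiv_symm_apply, PiLp.toLp_apply]
    rw [Real.norm_eq_abs, sq_abs]
  have hw : ‖w‖ = Real.sqrt (∑ j, (v j) ^ 2) := by
    rw [EuclideanSpace.norm_eq]
    congr 1
    refine Finset.sum_congr rfl fun j _ => ?_
    rw [Real.norm_eq_abs, sq_abs]
    rfl
  have key : ∑ i, (M.mulVec v i) ^ 2 ≤ frobSq M * ∑ j, (v j) ^ 2 := by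
    rw [frobSq_eq, Finset.sum_comm, Finset.sum_mul]
    refine Finset.sum_le_sum fun i _ => ?_
    exact Finset.sum_mul_sq_le_sq_mul_sq Finset.univ (fun j => M i j) v
  rw [hnorm, hw, ← Real.sqrt_mul (frobSq_nonneg M)]
  exact Real.sqrt_le_sqrt key

section SystemBounds

variable {N mm pp : ℕ} (A : Matrix (Fin N) (Fin N) ℝ) (B : Matrix (Fin N) (Fin mm) ℝ)
  (C : Matrix (Fin pp) (Fin N) ℝ)

lemma exp_smul_continuous : Continuous fun τ : ℝ => NormedSpace.exp (τ • A) :=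
  NormedSpace.exp_continuous.comp (continuous_id.smul continuous_const)

lemma gA_continuous : Continuous fun τ : ℝ => frobSq (C * NormedSpace.exp (τ • A) * B) := by
  have hM : Continuous fun τ : ℝ => C * NormedSpace.exp (τ • A) * B :=
    (continuous_const.matrix_mul (exp_smul_continuous A)).matrix_mul continuous_const
  have : (fun τ : ℝ => frobSq (C * NormedSpace.exp (τ • A) * B))
      = fun τ : ℝ => ∑ j, ∑ i, ((C * NormedSpace.exp (τ • A) * B) i j) ^ 2 := by
    funext τ; rw [frobSq_eq]
  rw [this]
  refine continuous_finset_sum _ fun j _ => continuous_finset_sum _ fun i _ => ?_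
  exact (hM.matrix_elem i j).pow 2

lemma gA_decay (hA : A.IsHurwitz) : ∃ K α : ℝ, 0 < K ∧ 0 < α ∧ ∀ τ : ℝ, 0 ≤ τ →
    frobSq (C * NormedSpace.exp (τ • A) * B) ≤ K * Real.exp (-α * τ) := by
  obtain ⟨K, α, hK, hα, hbd⟩ := real_decay A hA
  refine ⟨(pp * mm : ℕ) * (‖C‖ * ‖B‖ * K) ^ 2 + 1, 2 * α, by positivity, by positivity,
    fun τ hτ => ?_⟩
  have h1 : ‖C * NormedSpace.exp (τ • A) * B‖ ≤ ‖C‖ * (K * Real.exp (-α * τ)) * ‖B‖ := by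
    calc ‖C * NormedSpace.exp (τ • A) * B‖
        ≤ ‖C * NormedSpace.exp (τ • A)‖ * ‖B‖ := Matrix.linfty_opNorm_mul _ _
      _ ≤ ‖C‖ * ‖NormedSpace.exp (τ • A)‖ * ‖B‖ := by
          exact mul_le_mul_of_nonneg_right (Matrix.linfty_opNorm_mul _ _) (norm_nonneg _)
      _ ≤ ‖C‖ * (K * Real.exp (-α * τ)) * ‖B‖ := by
          refine mul_le_mul_of_nonneg_right ?_ (norm_nonneg _)
          exact mul_le_mul_of_nonneg_left (hbd τ hτ) (norm_nonneg _)
  have h2 := frobSq_le (C * NormedSpace.exp (τ • A) * B)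
  have h3 : ‖C * NormedSpace.exp (τ • A) * B‖ ^ 2
      ≤ (‖C‖ * (K * Real.exp (-α * τ)) * ‖B‖) ^ 2 :=
    pow_le_pow_left₀ (norm_nonneg _) h1 2
  have hexp : Real.exp (-α * τ) ^ 2 = Real.exp (-(2 * α) * τ) := by
    rw [← Real.exp_nat_mul]
    ring_nf
  calc frobSq (C * NormedSpace.exp (τ • A) * B)
      ≤ (pp * mm : ℕ) * (‖C‖ * (K * Real.exp (-α * τ)) * ‖B‖) ^ 2 := by
        refine h2.trans ?_
        exact mul_le_mul_of_nonneg_left h3 (by positivity)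
    _ = (pp * mm : ℕ) * (‖C‖ * ‖B‖ * K) ^ 2 * Real.exp (-(2 * α) * τ) := by
        rw [← hexp]; ring
    _ ≤ ((pp * mm : ℕ) * (‖C‖ * ‖B‖ * K) ^ 2 + 1) * Real.exp (-(2 * α) * τ) := by
        refine mul_le_mul_of_nonneg_right ?_ (Real.exp_pos _).le
        linarith
    _ = _ := by ring_nf

lemma gA_integrableOn (hA : A.IsHurwitz) :
    IntegrableOn (fun τ : ℝ => frobSq (C * NormedSpace.exp (τ • A) * B))
      (Set.Ici (0 : ℝ)) := by
  obtain ⟨K, α, hK, hα, hbd⟩ := gA_decay A B C hA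
  have hint : IntegrableOn (fun τ : ℝ => K * Real.exp (-α * τ)) (Set.Ici (0 : ℝ)) := by
    rw [integrableOn_Ici_iff_integrableOn_Ioi]
    exact (exp_neg_integrableOn_Ioi 0 hα).const_mul K
  refine hint.mono' ((gA_continuous A B C).aestronglyMeasurable.restrict) ?_
  rw [MeasureTheory.ae_restrict_iff' measurableSet_Ici]
  filter_upwards with τ hτ
  rw [Real.norm_eq_abs, abs_of_nonneg (frobSq_nonneg _)]
  exact hbd τ hτ

end SystemBounds

end Aux

/-- For a Hurwitz system `(A, B, C)` and a square-integrable input `u`,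
the output `y(t) = ∫₀^t C e^{(t-s)A} B u(s) ds` satisfies, for every `t ≥ 0`,
`‖y(t)‖₂ ≤ (∫₀^∞ ‖C e^{τA} B‖_F² dτ)^{1/2} · (∫₀^∞ ‖u(s)‖₂² ds)^{1/2}`:
the `L^∞`-norm of the output is bounded by the `H₂`-norm of the transfer function
times the `L²`-norm of the input. -/
theorem output_Linfty_le_H2_mul_L2 {N m p : ℕ}
    (A : Matrix (Fin N) (Fin N) ℝ) (B : Matrix (Fin N) (Fin m) ℝ)
    (C : Matrix (Fin p) (Fin N) ℝ) (hA : A.IsHurwitz)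
    (u : ℝ → EuclideanSpace ℝ (Fin m))
    (hu_meas : Measurable u)
    (hu_L2 : IntegrableOn (fun s => ‖u s‖ ^ 2) (Set.Ici (0 : ℝ)))
    (y : ℝ → EuclideanSpace ℝ (Fin p))
    (hy : ∀ t : ℝ, y t = ∫ s in (0 : ℝ)..t,
        (WithLp.equiv 2 (Fin p → ℝ)).symm
          ((C * NormedSpace.exp ((t - s) • A) * B).mulVec
            (WithLp.equiv 2 (Fin m → ℝ) (u s)))) :
    ∀ t ≥ (0 : ℝ), ‖y t‖ ≤
      Real.sqrt (∫ τ in Set.Ici (0 : ℝ), frobSq (C * NormedSpace.exp (τ • A) * B)) *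
        Real.sqrt (∫ s in Set.Ici (0 : ℝ), ‖u s‖ ^ 2) := by
  intro t ht
  have hIoc : Set.Ioc (0:ℝ) t ⊆ Set.Ici (0:ℝ) := fun x hx => le_of_lt hx.1
  set g : ℝ → ℝ := fun τ => frobSq (C * NormedSpace.exp (τ • A) * B) with hgdef
  have hg_cont : Continuous g := gA_continuous A B C
  have hg_nonneg : ∀ τ, 0 ≤ g τ := fun τ => frobSq_nonneg _
  have hg_int : IntegrableOn g (Set.Ici 0) := gA_integrableOn A B C hA
  obtain ⟨K, α, hK, hα, hbd⟩ := gA_decay A B C hA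
  set f : ℝ → EuclideanSpace ℝ (Fin p) := fun s =>
    (WithLp.equiv 2 (Fin p → ℝ)).symm
      ((C * NormedSpace.exp ((t - s) • A) * B).mulVec
        (WithLp.equiv 2 (Fin m → ℝ) (u s))) with hfdef
  -- measurability of the integrand
  have hM_cont : Continuous fun s : ℝ => C * NormedSpace.exp ((t - s) • A) * B := by
    have : Continuous fun s : ℝ => NormedSpace.exp ((t - s) • A) :=
      (exp_smul_continuous A).comp (continuous_const.sub continuous_id)
    exact (continuous_const.matrix_mul this).matrix_mul continuous_const
  have hw_meas : Measurable fun s : ℝ => (WithLp.equiv 2 (Fin m → ℝ)) (u s) :=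
    (PiLp.continuous_ofLp 2 (fun _ : Fin m => ℝ)).measurable.comp hu_meas
  have hmv_meas : Measurable fun s : ℝ =>
      (C * NormedSpace.exp ((t - s) • A) * B).mulVec
        (WithLp.equiv 2 (Fin m → ℝ) (u s)) := by
    refine measurable_pi_lambda _ fun i => ?_
    have : (fun s : ℝ => (C * NormedSpace.exp ((t - s) • A) * B).mulVec
        ((WithLp.equiv 2 (Fin m → ℝ)) (u s)) i)
        = fun s : ℝ => ∑ j, (C * NormedSpace.exp ((t - s) • A) * B) i j
            * (WithLp.equiv 2 (Fin m → ℝ)) (u s) j := by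
      funext s
      rw [Matrix.mulVec, dotProduct]
    rw [this]
    refine Finset.measurable_sum _ fun j _ => Measurable.mul ?_ ?_
    · exact (hM_cont.matrix_elem i j).measurable
    · exact (measurable_pi_apply j).comp hw_meas
  have hf_meas : Measurable f :=
    (PiLp.continuous_toLp 2 (fun _ : Fin p => ℝ)).measurable.comp hmv_meas
  -- pointwise bound
  have hpt : ∀ s, ‖f s‖ ≤ Real.sqrt (g (t - s)) * ‖u s‖ := fun s =>
    mulVec_norm_le (C * NormedSpace.exp ((t - s) • A) * B) (u s)
  set φ : ℝ → ℝ := fun s => Real.sqrt (g (t - s)) * ‖u s‖ with hφdef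
  have hu_norm_meas : Measurable fun s : ℝ => ‖u s‖ := hu_meas.norm
  have hu2_int : IntegrableOn (fun s => ‖u s‖ ^ 2) (Set.Ioc 0 t) :=
    hu_L2.mono_set hIoc
  have hsg_cont : Continuous fun s : ℝ => Real.sqrt (g (t - s)) :=
    Real.continuous_sqrt.comp (hg_cont.comp (continuous_const.sub continuous_id))
  have hφ_meas : Measurable φ := (hsg_cont.measurable).mul hu_norm_meas
  -- integrability of φ on Ioc 0 t
  have hgK : ∀ s ∈ Set.Ioc (0:ℝ) t, Real.sqrt (g (t - s)) ≤ Real.sqrt K := by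
    intro s hs
    refine Real.sqrt_le_sqrt ?_
    have h1 : 0 ≤ t - s := by linarith [hs.2]
    calc g (t - s) ≤ K * Real.exp (-α * (t - s)) := hbd _ h1
      _ ≤ K * 1 := by
          refine mul_le_mul_of_nonneg_left ?_ hK.le
          rw [← Real.exp_zero]
          exact Real.exp_le_exp.mpr (by nlinarith)
      _ = K := mul_one K
  have hφ_int : IntegrableOn φ (Set.Ioc 0 t) := by
    have hdom : IntegrableOn (fun s : ℝ => Real.sqrt K * (1 + ‖u s‖ ^ 2)) (Set.Ioc 0 t) := by
      refine Integrable.const_mul ?_ _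
      exact (integrable_const 1).add hu2_int
    refine hdom.mono' hφ_meas.aestronglyMeasurable.restrict ?_
    rw [MeasureTheory.ae_restrict_iff' measurableSet_Ioc]
    filter_upwards with s hs
    have h1 : 0 ≤ Real.sqrt (g (t - s)) := Real.sqrt_nonneg _
    have h2 : 0 ≤ ‖u s‖ := norm_nonneg _
    rw [Real.norm_eq_abs, abs_of_nonneg (by positivity)]
    have h3 : ‖u s‖ ≤ 1 + ‖u s‖ ^ 2 := by nlinarith
    calc Real.sqrt (g (t - s)) * ‖u s‖ ≤ Real.sqrt K * ‖u s‖ :=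
          mul_le_mul_of_nonneg_right (hgK s hs) h2
      _ ≤ Real.sqrt K * (1 + ‖u s‖ ^ 2) :=
          mul_le_mul_of_nonneg_left h3 (Real.sqrt_nonneg _)
  have hfn_int : IntegrableOn (fun s => ‖f s‖) (Set.Ioc 0 t) := by
    refine hφ_int.mono' hf_meas.norm.aestronglyMeasurable.restrict ?_
    filter_upwards with s
    rw [norm_norm]
    exact hpt s
  -- step 1 : bound the output by the integral of φ
  have step1 : ‖y t‖ ≤ ∫ s in Set.Ioc 0 t, φ s := by
    rw [hy t]
    calc ‖∫ s in (0:ℝ)..t, f s‖ ≤ ∫ s in (0:ℝ)..t, ‖f s‖ :=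
          intervalIntegral.norm_integral_le_integral_norm ht
      _ = ∫ s in Set.Ioc 0 t, ‖f s‖ := intervalIntegral.integral_of_le ht
      _ ≤ ∫ s in Set.Ioc 0 t, φ s :=
          setIntegral_mono_on hfn_int hφ_int measurableSet_Ioc fun s _ => hpt s
  -- step 2 : Cauchy-Schwarz
  have h22 : (2 : ℝ).HolderConjugate 2 := Real.HolderConjugate.two_two
  have hsg_mem : MemLp (fun s : ℝ => Real.sqrt (g (t - s))) (ENNReal.ofReal 2)
      (volume.restrict (Set.Ioc 0 t)) := by
    have h2 : (ENNReal.ofReal 2) = 2 := by norm_num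
    rw [h2, memLp_two_iff_integrable_sq hsg_cont.aestronglyMeasurable.restrict]
    have : (fun s : ℝ => Real.sqrt (g (t - s)) ^ 2) = fun s => g (t - s) := by
      funext s
      exact Real.sq_sqrt (hg_nonneg _)
    rw [this]
    exact (hg_cont.comp (continuous_const.sub continuous_id)).integrableOn_Ioc
  have hu_mem : MemLp (fun s : ℝ => ‖u s‖) (ENNReal.ofReal 2)
      (volume.restrict (Set.Ioc 0 t)) := by
    have h2 : (ENNReal.ofReal 2) = 2 := by norm_num
    rw [h2, memLp_two_iff_integrable_sq hu_norm_meas.aestronglyMeasurable.restrict]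
    exact hu2_int
  have CS := integral_mul_le_Lp_mul_Lq_of_nonneg h22
    (MeasureTheory.ae_of_all _ fun s => Real.sqrt_nonneg (g (t - s)))
    (MeasureTheory.ae_of_all _ fun s => norm_nonneg (u s)) hsg_mem hu_mem
  have step2 : ∫ s in Set.Ioc 0 t, φ s
      ≤ Real.sqrt (∫ s in Set.Ioc 0 t, g (t - s)) * Real.sqrt (∫ s in Set.Ioc 0 t, ‖u s‖ ^ 2) := by
    have e1 : (fun s : ℝ => Real.sqrt (g (t - s)) ^ (2:ℝ)) = fun s : ℝ => g (t - s) := by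
      funext s
      rw [Real.rpow_two, Real.sq_sqrt (hg_nonneg _)]
    have e2 : (fun s : ℝ => ‖u s‖ ^ (2:ℝ)) = fun s : ℝ => ‖u s‖ ^ 2 := by
      funext s
      rw [Real.rpow_two]
    simp only [e1, e2] at CS
    calc ∫ s in Set.Ioc 0 t, φ s
        = ∫ s in Set.Ioc 0 t, Real.sqrt (g (t - s)) * ‖u s‖ := rfl
      _ ≤ (∫ s in Set.Ioc 0 t, g (t - s)) ^ ((1:ℝ)/2)
            * (∫ s in Set.Ioc 0 t, ‖u s‖ ^ 2) ^ ((1:ℝ)/2) := CS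
      _ = Real.sqrt (∫ s in Set.Ioc 0 t, g (t - s))
            * Real.sqrt (∫ s in Set.Ioc 0 t, ‖u s‖ ^ 2) := by
          rw [← Real.sqrt_eq_rpow, ← Real.sqrt_eq_rpow]
  -- step 3 : change of variables
  have hcov : ∫ s in Set.Ioc 0 t, g (t - s) = ∫ τ in Set.Ioc 0 t, g τ := by
    rw [← intervalIntegral.integral_of_le ht, ← intervalIntegral.integral_of_le ht,
      intervalIntegral.integral_comp_sub_left g t]
    norm_num
  -- step 4 : monotonicity
  have hmono1 : ∫ τ in Set.Ioc 0 t, g τ ≤ ∫ τ in Set.Ici (0:ℝ), g τ := by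
    refine setIntegral_mono_set hg_int ?_ ?_
    · exact (MeasureTheory.ae_restrict_iff' measurableSet_Ici).mpr
        (MeasureTheory.ae_of_all _ fun τ _ => hg_nonneg τ)
    · exact MeasureTheory.ae_of_all _ fun τ hτ => hIoc hτ
  have hmono2 : ∫ s in Set.Ioc 0 t, ‖u s‖ ^ 2 ≤ ∫ s in Set.Ici (0:ℝ), ‖u s‖ ^ 2 := by
    refine setIntegral_mono_set hu_L2 ?_ ?_
    · exact (MeasureTheory.ae_restrict_iff' measurableSet_Ici).mpr
        (MeasureTheory.ae_of_all _ fun s _ => sq_nonneg _)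
    · exact MeasureTheory.ae_of_all _ fun s hs => hIoc hs
  calc ‖y t‖ ≤ ∫ s in Set.Ioc 0 t, φ s := step1
    _ ≤ Real.sqrt (∫ s in Set.Ioc 0 t, g (t - s)) * Real.sqrt (∫ s in Set.Ioc 0 t, ‖u s‖ ^ 2) :=
        step2
    _ ≤ Real.sqrt (∫ τ in Set.Ici (0:ℝ), g τ) * Real.sqrt (∫ s in Set.Ici (0:ℝ), ‖u s‖ ^ 2) := by
        refine mul_le_mul ?_ ?_ (Real.sqrt_nonneg _) (Real.sqrt_nonneg _)
        · rw [hcov]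
          exact Real.sqrt_le_sqrt hmono1
        · exact Real.sqrt_le_sqrt hmono2
end

section
/- Let Ã be an invertible real N×N matrix, U and V real N×ℓ matrices, G an invertible real ℓ×ℓ matrix such that G⁻¹ − Vᵀ Ã⁻¹ U is invertible, and let c > 0. Suppose A := Ã − U G Vᵀ is invertible. Define Ã⁺ := (1/2)(c Ã + c⁻¹ Ã⁻¹), U⁺ := [U, Ã⁻¹U] (N×2ℓ), V⁺ := [V, Ã⁻ᵀV] (N×2ℓ), and the 2ℓ×2ℓ block-diagonal matrix G⁺ := (1/2) diag(c G, −c⁻¹ (G⁻¹ − Vᵀ Ã⁻¹ U)⁻¹). Then the Newton sign-function iterate of A preserves the low-rank-update structure: (1/2)(c A + c⁻¹ A⁻¹) = Ã⁺ − U⁺ G⁺ (V⁺)ᵀ. -/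
open Matrix

/-- The Newton sign-function iterate preserves the low-rank-update
structure `A = Ã - U G Vᵀ`: with `Ã⁺ = (1/2)(c Ã + c⁻¹ Ã⁻¹)`, `U⁺ = [U, Ã⁻¹U]`,
`V⁺ = [V, Ã⁻ᵀV]` and `G⁺ = (1/2) diag(c G, -c⁻¹ (G⁻¹ - Vᵀ Ã⁻¹ U)⁻¹)` (using the
Sherman–Morrison–Woodbury formula), one has
`(1/2)(c A + c⁻¹ A⁻¹) = Ã⁺ - U⁺ G⁺ (V⁺)ᵀ`. -/
theorem sign_function_newton_step_structured {N ℓ : ℕ}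
    (Atil : Matrix (Fin N) (Fin N) ℝ) (U V : Matrix (Fin N) (Fin ℓ) ℝ)
    (G : Matrix (Fin ℓ) (Fin ℓ) ℝ) (c : ℝ)
    (hAtil : IsUnit Atil) (hG : IsUnit G)
    (hSMW : IsUnit (G⁻¹ - Vᵀ * Atil⁻¹ * U))
    (hc : 0 < c)
    (hA : IsUnit (Atil - U * G * Vᵀ)) :
    (2 : ℝ)⁻¹ • (c • (Atil - U * G * Vᵀ) + c⁻¹ • (Atil - U * G * Vᵀ)⁻¹)
      = (2 : ℝ)⁻¹ • (c • Atil + c⁻¹ • Atil⁻¹) -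
          fromCols U (Atil⁻¹ * U) *
            fromBlocks ((c / 2) • G) 0 0
              ((-(1 / (2 * c))) • (G⁻¹ - Vᵀ * Atil⁻¹ * U)⁻¹) *
            (fromCols V (Atil⁻¹ᵀ * V))ᵀ := by
  set S := G⁻¹ - Vᵀ * Atil⁻¹ * U with hSdef
  have hnegG : IsUnit (-G) := hG.neg
  have hinvnegG : (-G)⁻¹ = -G⁻¹ :=
    Matrix.inv_eq_right_inv (by rw [neg_mul_neg, Matrix.mul_nonsing_inv G ((Matrix.isUnit_iff_isUnit_det G).mp hG)])
  have hinvnegS : (-S)⁻¹ = -S⁻¹ :=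
    Matrix.inv_eq_right_inv (by rw [neg_mul_neg, Matrix.mul_nonsing_inv S ((Matrix.isUnit_iff_isUnit_det S).mp hSMW)])
  have hC : (-G)⁻¹ + Vᵀ * Atil⁻¹ * U = -S := by
    rw [hinvnegG, hSdef, neg_sub]; abel
  have hW : (Atil - U * G * Vᵀ)⁻¹
      = Atil⁻¹ + Atil⁻¹ * U * S⁻¹ * Vᵀ * Atil⁻¹ := by
    have h := Matrix.add_mul_mul_inv_eq_sub Atil U (-G) Vᵀ hAtil hnegG
      (by rw [hC]; exact hSMW.neg)
    rw [hC, hinvnegS] at h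
    have h2 : Atil + U * -G * Vᵀ = Atil - U * G * Vᵀ := by
      rw [Matrix.mul_neg, Matrix.neg_mul, ← sub_eq_add_neg]
    rw [h2] at h
    rw [h]
    simp [Matrix.mul_neg, Matrix.neg_mul, sub_eq_add_neg]
  rw [hW, transpose_fromCols, fromCols_mul_fromBlocks, fromCols_mul_fromRows]
  have hc' : c ≠ 0 := ne_of_gt hc
  simp only [Matrix.mul_zero, Matrix.zero_mul, add_zero, zero_add,
    Matrix.smul_mul, Matrix.mul_smul, transpose_mul, transpose_transpose,
    Matrix.transpose_smul, smul_add, smul_smul]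
  have e1 : (2:ℝ)⁻¹ * c = c / 2 := by ring
  have e2 : (2:ℝ)⁻¹ * c⁻¹ = 1 / (2 * c) := by field_simp
  rw [e1, e2]
  rw [e2.symm] at *
  simp only [Matrix.mul_assoc, smul_sub, smul_add]
  module
end
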